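/- Let n ∈ ℤ^d_{>0} be a velocity vector and let Z_n := [0,e_1] + ... + [0,e_d] + [0,n] be the lonely runner zonotope. Then the total number of lattice points of Z_n satisfies #(Z_n ∩ ℤ^d) = 2^d + Σ_ℓ φ(ℓ)·(2^{#J_ℓ} − 1), where the sum runs over all positive integers ℓ that divide n_j for at least one j ∈ {1,...,d}, J_ℓ := {j ∈ {1,...,d} : ℓ divides n_j}, and φ is Euler's totient function. -/

import Mathlib

open Pointwise

namespace LRAux

variable {d : ℕ}

/-- lattice vector candidates: corner of cube -/
def corner (ε : Fin d → Bool) : Fin d → ℤ := fun i => if ε i then 1 else 0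

def zvec (n : Fin d → ℤ) (ℓ a : ℕ) (ε : Fin d → Bool) : Fin d → ℤ :=
  fun i => (a * n i) / ℓ + (if (ℓ:ℤ) ∣ n i then (if ε i then 1 else 0) else 1)

def F0 : Finset (Fin d → ℤ) := Finset.univ.image corner

def choices (n : Fin d → ℤ) (ℓ : ℕ) : Finset (Fin d → Bool) :=
  Finset.univ.filter (fun ε => (∀ i, ε i = true → (ℓ:ℤ) ∣ n i) ∧ ∃ j, ε j = true)

def D (n : Fin d → ℤ) : Finset ℕ := Finset.univ.biUnion (fun j => (n j).toNat.divisors)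

def Aset (ℓ : ℕ) : Finset ℕ := (Finset.Ioc 0 ℓ).filter (fun a => Nat.Coprime a ℓ)

def F1 (n : Fin d → ℤ) : Finset (Fin d → ℤ) :=
  (D n).biUnion fun ℓ => (Aset ℓ).biUnion fun a => (choices n ℓ).image (zvec n ℓ a)

def lset (n : Fin d → ℤ) : Set (Fin d → ℤ) :=
  {z | ∃ s : ℝ, 0 ≤ s ∧ s ≤ 1 ∧ ∀ i, s * n i ≤ (z i : ℝ) ∧ (z i : ℝ) ≤ s * n i + 1}

theorem card_Aset {ℓ : ℕ} (hℓ : 0 < ℓ) : (Aset ℓ).card = ℓ.totient := by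
  rw [Nat.totient_eq_card_coprime, Aset]
  apply Finset.card_bij' (i := fun a _ => a % ℓ) (j := fun b _ => if b = 0 then ℓ else b)
  · intro a ha
    simp only [Finset.mem_filter, Finset.mem_Ioc] at ha
    simp only [Finset.mem_filter, Finset.mem_range]
    refine ⟨Nat.mod_lt _ hℓ, ?_⟩
    have h := Nat.gcd_rec ℓ a
    have : Nat.gcd ℓ (a % ℓ) = 1 := by
      rw [Nat.gcd_comm, ← h, Nat.gcd_comm]; exact ha.2
    exact this
  · intro b hb
    simp only [Finset.mem_filter, Finset.mem_range] at hb
    by_cases h : b = 0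
    · subst h
      have : ℓ = 1 := (Nat.coprime_zero_right ℓ).1 hb.2
      simp [Finset.mem_filter, Finset.mem_Ioc, hℓ, this]
    · rw [if_neg h]
      exact Finset.mem_filter.2 ⟨Finset.mem_Ioc.2 ⟨Nat.pos_of_ne_zero h, hb.1.le⟩, hb.2.symm⟩
  · intro a ha
    simp only [Finset.mem_filter, Finset.mem_Ioc] at ha
    rcases eq_or_lt_of_le ha.1.2 with h | h
    · subst h; simp
    · have h1 : a % ℓ = a := Nat.mod_eq_of_lt h
      have h2 : a ≠ 0 := ha.1.1.ne'
      simp [h1, h2]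
  · intro b hb
    simp only [Finset.mem_filter, Finset.mem_range] at hb
    by_cases h : b = 0
    · simp [h]
    · simp [h, Nat.mod_eq_of_lt hb.1]


theorem ediv_facts {x ℓ : ℤ} (hℓ : 0 < ℓ) :
    ((x / ℓ : ℤ) : ℝ) ≤ (x:ℝ)/(ℓ:ℝ) ∧ (x:ℝ)/(ℓ:ℝ) < ((x / ℓ : ℤ) : ℝ) + 1 ∧
      (ℓ ∣ x → ((x / ℓ : ℤ) : ℝ) = (x:ℝ)/(ℓ:ℝ)) ∧ (¬ ℓ ∣ x → ((x / ℓ : ℤ) : ℝ) < (x:ℝ)/(ℓ:ℝ)) := by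
  have h := Int.mul_ediv_add_emod x ℓ
  have hr0 := Int.emod_nonneg x hℓ.ne'
  have hr1 := Int.emod_lt_of_pos x hℓ
  have hℓR : (0:ℝ) < (ℓ:ℝ) := by exact_mod_cast hℓ
  have hx : (x:ℝ) = (ℓ:ℝ) * ((x / ℓ : ℤ):ℝ) + ((x % ℓ : ℤ):ℝ) := by exact_mod_cast h.symm
  have hxd : (x:ℝ)/(ℓ:ℝ) = ((x / ℓ : ℤ):ℝ) + ((x % ℓ : ℤ):ℝ)/(ℓ:ℝ) := by
    rw [hx]; field_simp
  have hr0R : (0:ℝ) ≤ ((x % ℓ : ℤ):ℝ) := by exact_mod_cast hr0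
  have hr1R : ((x % ℓ : ℤ):ℝ) < (ℓ:ℝ) := by exact_mod_cast hr1
  refine ⟨?_, ?_, ?_, ?_⟩
  · rw [hxd]; nlinarith [div_nonneg hr0R hℓR.le]
  · rw [hxd]
    have : ((x % ℓ : ℤ):ℝ)/(ℓ:ℝ) < 1 := (div_lt_one hℓR).2 hr1R
    linarith
  · intro hdvd
    have : x % ℓ = 0 := Int.emod_eq_zero_of_dvd hdvd
    rw [hxd, this]; simp
  · intro hdvd
    have hne : x % ℓ ≠ 0 := fun hc => hdvd (Int.dvd_of_emod_eq_zero hc)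
    have : (0:ℝ) < ((x % ℓ : ℤ):ℝ) := by
      have : 0 < x % ℓ := lt_of_le_of_ne hr0 (Ne.symm hne)
      exact_mod_cast this
    rw [hxd]
    have : (0:ℝ) < ((x % ℓ : ℤ):ℝ)/(ℓ:ℝ) := div_pos this hℓR
    linarith

variable {n : Fin d → ℤ}

theorem zvec_bounds (hpos : ∀ i, 0 < n i) {ℓ a : ℕ} (hℓ : 0 < ℓ) {ε : Fin d → Bool} (i : Fin d) :
    ((a:ℝ)/(ℓ:ℝ)) * n i ≤ (zvec n ℓ a ε i : ℝ) ∧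
      (zvec n ℓ a ε i : ℝ) ≤ ((a:ℝ)/(ℓ:ℝ)) * n i + 1 := by
  have hℓZ : (0:ℤ) < (ℓ:ℤ) := by exact_mod_cast hℓ
  obtain ⟨h1, h2, h3, h4⟩ := ediv_facts (x := (a:ℤ) * n i) hℓZ
  have hs : ((a:ℝ)/(ℓ:ℝ)) * n i = ((a:ℝ) * (n i:ℝ))/(ℓ:ℝ) := by ring
  rw [hs]
  push_cast at h1 h2
  unfold zvec
  split_ifs with hdvd hε
  · have hd2 : (ℓ:ℤ) ∣ (a:ℤ) * n i := Dvd.dvd.mul_left hdvd _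
    have he := h3 hd2
    push_cast at he
    push_cast
    constructor <;> linarith
  · have hd2 : (ℓ:ℤ) ∣ (a:ℤ) * n i := Dvd.dvd.mul_left hdvd _
    have he := h3 hd2
    push_cast at he
    push_cast
    constructor <;> linarith
  · push_cast
    constructor <;> linarith

theorem zvec_exact (hpos : ∀ i, 0 < n i) {ℓ a : ℕ} (hℓ : 0 < ℓ) {ε : Fin d → Bool} {j : Fin d}
    (hdvd : (ℓ:ℤ) ∣ n j) (hj : ε j = true) :
    (zvec n ℓ a ε j : ℝ) = ((a:ℝ)/(ℓ:ℝ)) * n j + 1 := by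
  have hℓZ : (0:ℤ) < (ℓ:ℤ) := by exact_mod_cast hℓ
  obtain ⟨h1, h2, h3, h4⟩ := ediv_facts (x := (a:ℤ) * n j) hℓZ
  have hd2 : (ℓ:ℤ) ∣ (a:ℤ) * n j := Dvd.dvd.mul_left hdvd _
  have he := h3 hd2
  push_cast at he
  have hs : ((a:ℝ)/(ℓ:ℝ)) * n j = ((a:ℝ) * (n j:ℝ))/(ℓ:ℝ) := by ring
  rw [hs]
  unfold zvec
  rw [if_pos hdvd, if_pos hj]
  push_cast
  linarith

theorem zvec_inj (hpos : ∀ i, 0 < n i) {ℓ a ℓ' a' : ℕ} {ε ε' : Fin d → Bool}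
    (hℓ : 0 < ℓ) (ha : 0 < a) (hcop : Nat.Coprime a ℓ)
    (hℓ' : 0 < ℓ') (ha' : 0 < a') (hcop' : Nat.Coprime a' ℓ')
    (hε : ∀ i, ε i = true → (ℓ:ℤ) ∣ n i) (hne : ∃ j, ε j = true)
    (hε' : ∀ i, ε' i = true → (ℓ':ℤ) ∣ n i) (hne' : ∃ j, ε' j = true)
    (heq : zvec n ℓ a ε = zvec n ℓ' a' ε') : ℓ = ℓ' ∧ a = a' ∧ ε = ε' := by
  obtain ⟨j, hj⟩ := hne
  obtain ⟨j', hj'⟩ := hne'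
  have hnR : ∀ i, (0:ℝ) < (n i : ℝ) := fun i => by exact_mod_cast hpos i
  have hss' : (a:ℝ)/(ℓ:ℝ) = (a':ℝ)/(ℓ':ℝ) := by
    have e1 : (zvec n ℓ a ε j : ℝ) = ((a:ℝ)/(ℓ:ℝ)) * n j + 1 :=
      zvec_exact hpos hℓ (hε j hj) hj
    have e1' : (zvec n ℓ' a' ε' j' : ℝ) = ((a':ℝ)/(ℓ':ℝ)) * n j' + 1 :=
      zvec_exact hpos hℓ' (hε' j' hj') hj'
    have b1 := (zvec_bounds (a := a) (ε := ε) hpos hℓ j').2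
    have b1' := (zvec_bounds (a := a') (ε := ε') hpos hℓ' j).2
    rw [congrFun heq j', e1'] at b1
    rw [← congrFun heq j, e1] at b1'
    have h1 : (a':ℝ)/(ℓ':ℝ) ≤ (a:ℝ)/(ℓ:ℝ) := by
      have := hnR j'
      nlinarith
    have h2 : (a:ℝ)/(ℓ:ℝ) ≤ (a':ℝ)/(ℓ':ℝ) := by
      have := hnR j
      nlinarith
    linarith
  have hℓR : (0:ℝ) < (ℓ:ℝ) := by exact_mod_cast hℓ
  have hℓR' : (0:ℝ) < (ℓ':ℝ) := by exact_mod_cast hℓ'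
  have hmul : a * ℓ' = a' * ℓ := by
    have := (div_eq_div_iff hℓR.ne' hℓR'.ne').1 hss'
    exact_mod_cast this
  have hll : ℓ = ℓ' := by
    refine Nat.dvd_antisymm ?_ ?_
    · exact (Nat.Coprime.symm hcop).dvd_of_dvd_mul_left ⟨a', by rw [hmul, mul_comm]⟩
    · exact (Nat.Coprime.symm hcop').dvd_of_dvd_mul_left ⟨a, by rw [← hmul, mul_comm]⟩
  subst hll
  have haa : a = a' := by
    have := Nat.eq_of_mul_eq_mul_right hℓ hmul
    omega
  subst haa
  refine ⟨rfl, rfl, funext fun i => ?_⟩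
  have hi := congrFun heq i
  unfold zvec at hi
  by_cases hd : (ℓ:ℤ) ∣ n i
  · rw [if_pos hd, if_pos hd] at hi
    have := add_left_cancel hi
    cases hε1 : ε i <;> cases hε2 : ε' i <;> simp_all
  · have h1 : ε i = false := by
      cases hε1 : ε i
      · rfl
      · exact absurd (hε i hε1) hd
    have h2 : ε' i = false := by
      cases hε2 : ε' i
      · rfl
      · exact absurd (hε' i hε2) hd
    rw [h1, h2]

theorem corner_mem_lset (hpos : ∀ i, 0 < n i) (ε : Fin d → Bool) : corner ε ∈ lset n := by
  refine ⟨0, le_refl _, zero_le_one, fun i => ?_⟩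
  unfold corner
  split_ifs <;> norm_num

theorem zvec_mem_lset (hpos : ∀ i, 0 < n i) {ℓ a : ℕ} (hℓ : 0 < ℓ) (ha : 0 < a) (haℓ : a ≤ ℓ)
    (ε : Fin d → Bool) : zvec n ℓ a ε ∈ lset n := by
  have hℓR : (0:ℝ) < (ℓ:ℝ) := by exact_mod_cast hℓ
  refine ⟨(a:ℝ)/(ℓ:ℝ), by positivity, ?_, fun i => zvec_bounds hpos hℓ i⟩
  rw [div_le_one hℓR]
  exact_mod_cast haℓ

theorem mem_F1 (hpos : ∀ i, 0 < n i) {ℓ a : ℕ} {ε : Fin d → Bool}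
    (hεc : ∀ i, ε i = true → (ℓ:ℤ) ∣ n i) {j : Fin d} (hεj : ε j = true)
    (hℓdvd : (ℓ:ℤ) ∣ n j) (ha : a ∈ Aset ℓ) :
    zvec n ℓ a ε ∈ F1 n := by
  refine Finset.mem_biUnion.2 ⟨ℓ, ?_, Finset.mem_biUnion.2 ⟨a, ha, Finset.mem_image.2
    ⟨ε, ?_, rfl⟩⟩⟩
  · refine Finset.mem_biUnion.2 ⟨j, Finset.mem_univ _, Nat.mem_divisors.2 ⟨?_, ?_⟩⟩
    · rw [← Int.natCast_dvd_natCast, Int.toNat_of_nonneg (hpos j).le]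
      exact hℓdvd
    · have := hpos j
      omega
  · exact Finset.mem_filter.2 ⟨Finset.mem_univ _, hεc, j, hεj⟩

theorem lset_subset (hd : 0 < d) (hpos : ∀ i, 0 < n i) :
    lset n ⊆ ↑(F0 ∪ F1 n) := by
  rintro z ⟨s, hs0, hs1, hb⟩
  have hnR : ∀ i, (0:ℝ) < (n i : ℝ) := fun i => by exact_mod_cast hpos i
  have hz0 : ∀ i, 0 ≤ z i := by
    intro i
    have h := (hb i).1
    have : (0:ℝ) ≤ (z i : ℝ) := le_trans (mul_nonneg hs0 (hnR i).le) h
    exact_mod_cast this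
  simp only [Finset.coe_union, Set.mem_union, Finset.mem_coe]
  by_cases hcor : ∀ i, z i = 0 ∨ z i = 1
  · left
    refine Finset.mem_image.2 ⟨fun i => decide (z i = 1), Finset.mem_univ _, ?_⟩
    funext i
    rcases hcor i with h | h <;> simp [corner, h]
  · right
    push_neg at hcor
    obtain ⟨i₀, hi₀⟩ := hcor
    have hzi₀ : 2 ≤ z i₀ := by
      have := hz0 i₀
      omega
    -- pick the maximizing index
    obtain ⟨j, -, hj⟩ := Finset.exists_max_image Finset.univ
      (fun i => ((z i : ℝ) - 1) / (n i : ℝ)) ⟨i₀, Finset.mem_univ _⟩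
    have hjmax : ∀ i, ((z i : ℝ) - 1) / (n i : ℝ) ≤ ((z j : ℝ) - 1) / (n j : ℝ) :=
      fun i => hj i (Finset.mem_univ _)
    set c : ℤ := z j - 1 with hc
    set m : ℤ := n j with hm
    have hmR : (0:ℝ) < (m:ℝ) := hnR j
    have hfj : ((z j : ℝ) - 1) / (n j : ℝ) = (c:ℝ)/(m:ℝ) := by push_cast [hc, hm]; ring_nf
    have hcpos : 0 < c := by
      have h1 : (0:ℝ) < ((z i₀ : ℝ) - 1) / (n i₀ : ℝ) := by
        have h2 : (2:ℝ) ≤ (z i₀ : ℝ) := by exact_mod_cast hzi₀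
        exact div_pos (by linarith) (hnR i₀)
      have h2 := lt_of_lt_of_le h1 (hjmax i₀)
      rw [hfj] at h2
      have : (0:ℝ) < (c:ℝ) := by
        by_contra hcon
        push_neg at hcon
        nlinarith [div_nonpos_of_nonpos_of_nonneg hcon hmR.le]
      exact_mod_cast this
    have hsRle : (c:ℝ)/(m:ℝ) ≤ s := by
      have h := (hb j).2
      rw [div_le_iff₀ hmR]
      push_cast [hc, hm]
      push_cast [hm] at h
      linarith
    have hcm : c ≤ m := by
      have : (c:ℝ) ≤ (m:ℝ) := by
        have := le_trans hsRle hs1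
        rw [div_le_one hmR] at this
        exact this
      exact_mod_cast this
    -- now the natural number data
    set cn : ℕ := c.toNat with hcn
    set mn : ℕ := m.toNat with hmn
    have hcnc : (cn:ℤ) = c := Int.toNat_of_nonneg hcpos.le
    have hmnm : (mn:ℤ) = m := Int.toNat_of_nonneg (hpos j).le
    set g : ℕ := Nat.gcd cn mn with hg
    have hcn0 : 0 < cn := by omega
    have hmn0 : 0 < mn := by omega
    have hg0 : 0 < g := Nat.gcd_pos_of_pos_left _ hcn0
    set a : ℕ := cn / g with hadef
    set ℓ : ℕ := mn / g with hℓdef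
    have hga : a * g = cn := Nat.div_mul_cancel (Nat.gcd_dvd_left _ _)
    have hgℓ : ℓ * g = mn := Nat.div_mul_cancel (Nat.gcd_dvd_right _ _)
    have ha0 : 0 < a := Nat.div_pos (Nat.le_of_dvd hcn0 (Nat.gcd_dvd_left _ _)) hg0
    have hℓ0 : 0 < ℓ := Nat.div_pos (Nat.le_of_dvd hmn0 (Nat.gcd_dvd_right _ _)) hg0
    have hcop : a.Coprime ℓ := Nat.coprime_div_gcd_div_gcd hg0
    have haℓ : a ≤ ℓ := Nat.div_le_div_right (by omega)
    have hℓdvd : ℓ ∣ mn := ⟨g, hgℓ.symm⟩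
    have hℓdvdm : (ℓ:ℤ) ∣ m := by
      rw [← hmnm]
      exact_mod_cast hℓdvd
    have hmulnat : a * mn = cn * ℓ := by rw [← hga, ← hgℓ]; ring
    have hmulint : (a:ℤ) * m = c * ℓ := by
      rw [← hcnc, ← hmnm]
      exact_mod_cast hmulnat
    have hℓR : (0:ℝ) < (ℓ:ℝ) := by exact_mod_cast hℓ0
    have hfrac : (a:ℝ)/(ℓ:ℝ) = (c:ℝ)/(m:ℝ) := by
      rw [div_eq_div_iff hℓR.ne' hmR.ne']
      exact_mod_cast congrArg (fun t : ℤ => (t:ℝ)) hmulint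
    -- the sign vector
    set ε : Fin d → Bool := fun i => decide ((ℓ:ℤ) ∣ n i ∧ z i = (a * n i)/(ℓ:ℤ) + 1) with hε
    have hεc : ∀ i, ε i = true → (ℓ:ℤ) ∣ n i := by
      intro i h
      rw [hε] at h
      exact (of_decide_eq_true h).1
    have hεj : ε j = true := by
      rw [hε]
      apply decide_eq_true
      refine ⟨by rw [← hm]; exact hℓdvdm, ?_⟩
      have : (a:ℤ) * n j = c * ℓ := by rw [← hm]; exact hmulint
      rw [this, Int.mul_ediv_cancel _ (by exact_mod_cast hℓ0.ne')]
      omega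
    -- z = zvec
    have hzeq : z = zvec n ℓ a ε := by
      funext i
      have hℓZ : (0:ℤ) < (ℓ:ℤ) := by exact_mod_cast hℓ0
      obtain ⟨h1, h2, h3, h4⟩ := ediv_facts (x := (a:ℤ) * n i) hℓZ
      push_cast at h1 h2
      have hup : (z i : ℝ) ≤ (a:ℝ) * (n i : ℝ) / (ℓ:ℝ) + 1 := by
        have := le_trans (hjmax i) (le_of_eq hfj)
        rw [← hfrac] at this
        rw [div_le_div_iff₀ (hnR i) hℓR] at this
        push_cast
        push_cast at this
        rw [div_add' _ _ _ hℓR.ne', le_div_iff₀ hℓR]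
        nlinarith
      have hlo : (a:ℝ) * (n i : ℝ) / (ℓ:ℝ) ≤ (z i : ℝ) := by
        have hsn := (hb i).1
        have h5 : ((a:ℝ)/(ℓ:ℝ)) * n i ≤ s * n i := by
          rw [hfrac]
          exact mul_le_mul_of_nonneg_right hsRle (hnR i).le
        have h6 : (a:ℝ) * (n i:ℝ) / (ℓ:ℝ) = ((a:ℝ)/(ℓ:ℝ)) * (n i:ℝ) := by ring
        linarith
      by_cases hdi : (ℓ:ℤ) ∣ n i
      · have hd2 : (ℓ:ℤ) ∣ (a:ℤ) * n i := Dvd.dvd.mul_left hdi _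
        have he := h3 hd2
        push_cast at he
        set q : ℤ := ((a:ℤ) * n i) / (ℓ:ℤ) with hq
        have hql : (q:ℝ) ≤ (z i : ℝ) := by rw [he]; exact hlo
        have hqu : (z i : ℝ) ≤ (q:ℝ) + 1 := by rw [he]; exact hup
        have hqlZ : q ≤ z i := by exact_mod_cast hql
        have hquZ : z i ≤ q + 1 := by exact_mod_cast hqu
        unfold zvec
        rw [if_pos hdi]
        rcases (by omega : z i = q ∨ z i = q + 1) with h | h
        · have hεi : ε i = false := by
            rw [hε]
            apply decide_eq_false
            rintro ⟨-, hzi⟩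
            rw [← hq] at hzi
            omega
          rw [hεi]
          simpa using h
        · have hεi : ε i = true := by
            rw [hε]
            exact decide_eq_true ⟨hdi, by rw [← hq]; omega⟩
          rw [hεi]
          simpa using h
      · have hnd : ¬ (ℓ:ℤ) ∣ (a:ℤ) * n i := by
          intro hcon
          apply hdi
          have hic : IsCoprime (ℓ:ℤ) (a:ℤ) := by
            rw [Int.isCoprime_iff_gcd_eq_one, Int.gcd_natCast_natCast]
            exact hcop.symm
          exact hic.dvd_of_dvd_mul_left hcon
        have hstrict := h4 hnd
        push_cast at hstrict
        set q : ℤ := ((a:ℤ) * n i) / (ℓ:ℤ) with hq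
        have hql : (q:ℝ) < (z i : ℝ) := lt_of_lt_of_le hstrict hlo
        have hqlZ : q + 1 ≤ z i := by
          have : q < z i := by exact_mod_cast hql
          omega
        have hquZ : z i ≤ q + 1 := by
          have h7 : (z i :ℝ) < ((q + 2 : ℤ) : ℝ) := by push_cast; linarith
          have : z i < q + 2 := by exact_mod_cast h7
          omega
        unfold zvec
        rw [if_neg hdi]
        omega
    rw [hzeq]
    exact mem_F1 hpos hεc hεj (by rw [← hm]; exact hℓdvdm)
      (Finset.mem_filter.2 ⟨Finset.mem_Ioc.2 ⟨ha0, haℓ⟩, hcop⟩)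

theorem F_subset_lset (hpos : ∀ i, 0 < n i) : ↑(F0 ∪ F1 n) ⊆ lset n := by
  intro z hz
  simp only [Finset.coe_union, Set.mem_union, Finset.mem_coe] at hz
  rcases hz with hz | hz
  · obtain ⟨ε, -, rfl⟩ := Finset.mem_image.1 hz
    exact corner_mem_lset hpos ε
  · obtain ⟨ℓ, hℓ, hz⟩ := Finset.mem_biUnion.1 hz
    obtain ⟨a, ha, hz⟩ := Finset.mem_biUnion.1 hz
    obtain ⟨ε, -, rfl⟩ := Finset.mem_image.1 hz
    obtain ⟨j, -, hjd⟩ := Finset.mem_biUnion.1 hℓ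
    have hℓ0 : 0 < ℓ := Nat.pos_of_mem_divisors hjd
    obtain ⟨hIoc, -⟩ := Finset.mem_filter.1 ha
    obtain ⟨ha0, haℓ⟩ := Finset.mem_Ioc.1 hIoc
    exact zvec_mem_lset hpos hℓ0 ha0 haℓ ε

theorem card_F0 : (F0 : Finset (Fin d → ℤ)).card = 2 ^ d := by
  rw [F0, Finset.card_image_of_injective _ ?_, Finset.card_univ]
  · simp
  · intro ε ε' h
    funext i
    have := congrFun h i
    unfold corner at this
    cases h1 : ε i <;> cases h2 : ε' i <;> simp_all

theorem card_choices (ℓ : ℕ) :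
    (choices n ℓ).card = 2 ^ (Finset.univ.filter fun j : Fin d => (ℓ:ℤ) ∣ n j).card - 1 := by
  set J := Finset.univ.filter fun j : Fin d => (ℓ:ℤ) ∣ n j with hJ
  have : (choices n ℓ).card = (J.powerset.erase ∅).card := by
    apply Finset.card_bij'
      (fun (ε : Fin d → Bool) (_ : ε ∈ choices n ℓ) => Finset.univ.filter (fun i => ε i = true))
      (fun (S : Finset (Fin d)) (_ : S ∈ J.powerset.erase ∅) => fun i => decide (i ∈ S))
    · intro ε hε
      obtain ⟨-, h1, j, hj⟩ := Finset.mem_filter.1 hε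
      refine Finset.mem_erase.2 ⟨?_, Finset.mem_powerset.2 ?_⟩
      · intro hcon
        have : j ∈ (∅ : Finset (Fin d)) := hcon ▸ Finset.mem_filter.2 ⟨Finset.mem_univ _, hj⟩
        simp at this
      · intro x hx
        exact Finset.mem_filter.2 ⟨Finset.mem_univ _, h1 x (Finset.mem_filter.1 hx).2⟩
    · intro S hS
      obtain ⟨hne, hsub⟩ := Finset.mem_erase.1 hS
      have hsub' := Finset.mem_powerset.1 hsub
      refine Finset.mem_filter.2 ⟨Finset.mem_univ _, fun i hi => ?_, ?_⟩
      · exact (Finset.mem_filter.1 (hsub' (of_decide_eq_true hi))).2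
      · obtain ⟨j, hj⟩ := Finset.nonempty_iff_ne_empty.2 hne
        exact ⟨j, decide_eq_true hj⟩
    · intro ε hε
      funext i
      simp
    · intro S hS
      ext i
      simp
  rw [this, Finset.card_erase_of_mem (Finset.empty_mem_powerset _), Finset.card_powerset]

theorem disj_F0_F1 (hpos : ∀ i, 0 < n i) : Disjoint F0 (F1 n) := by
  rw [Finset.disjoint_left]
  rintro z hz0 hz1
  obtain ⟨ε, -, hcor⟩ := Finset.mem_image.1 hz0
  obtain ⟨ℓ, hℓ, hz⟩ := Finset.mem_biUnion.1 hz1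
  obtain ⟨a, ha, hz⟩ := Finset.mem_biUnion.1 hz
  obtain ⟨ε', hε', hzv⟩ := Finset.mem_image.1 hz
  obtain ⟨j', hj'd⟩ := Finset.mem_biUnion.1 hℓ
  have hℓ0 : 0 < ℓ := Nat.pos_of_mem_divisors hj'd.2
  obtain ⟨-, h1, j, hj⟩ := Finset.mem_filter.1 hε'
  obtain ⟨hIoc, -⟩ := Finset.mem_filter.1 ha
  obtain ⟨ha0, haℓ⟩ := Finset.mem_Ioc.1 hIoc
  have hdvd : (ℓ:ℤ) ∣ n j := h1 j hj
  have hle : (ℓ:ℤ) ≤ n j := Int.le_of_dvd (hpos j) hdvd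
  have hax : (ℓ:ℤ) ≤ (a:ℤ) * n j := by
    have h2 : (1:ℤ) ≤ (a:ℤ) := by exact_mod_cast ha0
    nlinarith
  have hq : 1 ≤ ((a:ℤ) * n j) / (ℓ:ℤ) := by
    rw [Int.le_ediv_iff_mul_le (by exact_mod_cast hℓ0)]
    omega
  have hzj : 2 ≤ zvec n ℓ a ε' j := by
    unfold zvec
    rw [if_pos hdvd, if_pos hj]
    omega
  rw [hzv] at hzj
  rw [← hcor] at hzj
  unfold corner at hzj
  split_ifs at hzj <;> omega

theorem card_F1 (hpos : ∀ i, 0 < n i) :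
    (F1 n).card = ∑ ℓ ∈ D n,
      ℓ.totient * (2 ^ (Finset.univ.filter fun j : Fin d => (ℓ:ℤ) ∣ n j).card - 1) := by
  have hDpos : ∀ ℓ ∈ D n, 0 < ℓ := by
    intro ℓ hℓ
    obtain ⟨j, -, hjd⟩ := Finset.mem_biUnion.1 hℓ
    exact Nat.pos_of_mem_divisors hjd
  have hA : ∀ {ℓ a : ℕ}, a ∈ Aset ℓ → 0 < a ∧ a ≤ ℓ ∧ a.Coprime ℓ := by
    intro ℓ a ha
    obtain ⟨hIoc, hcop⟩ := Finset.mem_filter.1 ha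
    obtain ⟨ha0, haℓ⟩ := Finset.mem_Ioc.1 hIoc
    exact ⟨ha0, haℓ, hcop⟩
  have hC : ∀ {ℓ : ℕ} {ε : Fin d → Bool}, ε ∈ choices n ℓ →
      (∀ i, ε i = true → (ℓ:ℤ) ∣ n i) ∧ ∃ j, ε j = true := by
    intro ℓ ε hε
    exact (Finset.mem_filter.1 hε).2
  rw [F1, Finset.card_biUnion]
  · refine Finset.sum_congr rfl fun ℓ hℓ => ?_
    rw [Finset.card_biUnion]
    · have hterm : ∀ a ∈ Aset ℓ, (Finset.image (zvec n ℓ a) (choices n ℓ)).card =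
          2 ^ (Finset.univ.filter fun j : Fin d => (ℓ:ℤ) ∣ n j).card - 1 := by
        intro a ha
        rw [← card_choices (n := n) ℓ]
        apply Finset.card_image_of_injOn
        intro ε hε ε' hε' heq
        obtain ⟨h1, h2⟩ := hC hε
        obtain ⟨h1', h2'⟩ := hC hε'
        obtain ⟨ha0, haℓ, hcop⟩ := hA ha
        exact (zvec_inj hpos (hDpos ℓ hℓ) ha0 hcop (hDpos ℓ hℓ) ha0 hcop h1 h2 h1' h2' heq).2.2
      rw [Finset.sum_congr rfl hterm, Finset.sum_const, smul_eq_mul, card_Aset (hDpos ℓ hℓ)]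
    · intro a ha a' ha' hne
      rw [Function.onFun, Finset.disjoint_left]
      rintro z hz hz'
      obtain ⟨ε, hε, hzv⟩ := Finset.mem_image.1 hz
      obtain ⟨ε', hε'2, hzv'⟩ := Finset.mem_image.1 hz'
      obtain ⟨h1, h2⟩ := hC hε
      obtain ⟨h1', h2'⟩ := hC hε'2
      obtain ⟨ha0, haℓ, hcop⟩ := hA ha
      obtain ⟨ha0', haℓ', hcop'⟩ := hA ha'
      exact hne (zvec_inj hpos (hDpos ℓ hℓ) ha0 hcop (hDpos ℓ hℓ) ha0' hcop' h1 h2 h1' h2'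
        (hzv.trans hzv'.symm)).2.1
  · intro ℓ hℓ ℓ' hℓ' hne
    rw [Function.onFun, Finset.disjoint_left]
    rintro z hz hz'
    obtain ⟨a, ha, hz2⟩ := Finset.mem_biUnion.1 hz
    obtain ⟨a', ha', hz2'⟩ := Finset.mem_biUnion.1 hz'
    obtain ⟨ε, hε, hzv⟩ := Finset.mem_image.1 hz2
    obtain ⟨ε', hε'2, hzv'⟩ := Finset.mem_image.1 hz2'
    obtain ⟨h1, h2⟩ := hC hε
    obtain ⟨h1', h2'⟩ := hC hε'2
    obtain ⟨ha0, haℓ, hcop⟩ := hA ha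
    obtain ⟨ha0', haℓ', hcop'⟩ := hA ha'
    exact hne (zvec_inj hpos (hDpos ℓ hℓ) ha0 hcop (hDpos ℓ' hℓ') ha0' hcop' h1 h2 h1' h2'
      (hzv.trans hzv'.symm)).1

theorem sum_single_eq (t : Fin d → ℝ) : ∑ j : Fin d, t j • (Pi.single j 1 : Fin d → ℝ) = t := by
  funext i
  rw [Finset.sum_apply]
  have : ∀ j, (t j • (Pi.single j 1 : Fin d → ℝ)) i = if i = j then t j else 0 := by
    intro j
    rw [Pi.smul_apply, Pi.single_apply]
    split_ifs <;> simp
  rw [Finset.sum_congr rfl fun j _ => this j]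
  simp

theorem mem_Z_iff (x : Fin d → ℝ) :
    (x ∈ (∑ j : Fin d, segment ℝ (0 : Fin d → ℝ) (Pi.single j 1)) +
      segment ℝ (0 : Fin d → ℝ) (fun i => (n i : ℝ))) ↔
    ∃ (t : Fin d → ℝ) (s : ℝ), (∀ i, t i ∈ Set.Icc (0:ℝ) 1) ∧ s ∈ Set.Icc (0:ℝ) 1 ∧
      ∀ i, x i = t i + s * n i := by
  rw [Set.mem_add]
  constructor
  · rintro ⟨u, hu, v, hv, huv⟩
    rw [segment_eq_image] at hv
    obtain ⟨s, hs, hsv⟩ := hv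
    obtain ⟨g, hg, hgsum⟩ := Set.mem_fintype_sum _ _ |>.1 hu
    have hg' : ∀ j, ∃ θ, θ ∈ Set.Icc (0:ℝ) 1 ∧
        (1 - θ) • (0 : Fin d → ℝ) + θ • (Pi.single j 1 : Fin d → ℝ) = g j := by
      intro j
      have := hg j
      rw [segment_eq_image] at this
      obtain ⟨θ, h1, h2⟩ := this
      exact ⟨θ, h1, h2⟩
    choose θ hθmem hθeq using hg'
    have hgj : ∀ j, g j = θ j • (Pi.single j 1 : Fin d → ℝ) := by
      intro j
      rw [← hθeq j]
      simp
    have hu' : u = θ := by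
      rw [← hgsum]
      rw [Finset.sum_congr rfl fun j _ => hgj j]
      exact sum_single_eq θ
    refine ⟨θ, s, hθmem, hs, fun i => ?_⟩
    have hv' : v i = s * n i := by
      rw [← hsv]
      simp
    rw [← huv]
    rw [Pi.add_apply, hu', hv']
  · rintro ⟨t, s, ht, hs, hx⟩
    refine ⟨t, ?_, s • (fun i => (n i : ℝ)), ?_, ?_⟩
    · apply Set.mem_fintype_sum _ _ |>.2
      refine ⟨fun j => t j • (Pi.single j 1 : Fin d → ℝ), fun j => ?_, sum_single_eq t⟩
      rw [segment_eq_image]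
      exact ⟨t j, ht j, by simp⟩
    · rw [segment_eq_image]
      exact ⟨s, hs, by simp⟩
    · funext i
      rw [Pi.add_apply, Pi.smul_apply, smul_eq_mul]
      exact (hx i).symm



theorem main_card {d : ℕ} (hd : 2 ≤ d) (n : Fin d → ℤ) (hpos : ∀ i, 0 < n i) :
    (LRAux.lset n).ncard =
      2 ^ d + ∑ ℓ ∈ Finset.univ.biUnion (fun j : Fin d => (n j).toNat.divisors),
        ℓ.totient * (2 ^ (Finset.univ.filter fun j : Fin d => (ℓ : ℤ) ∣ n j).card - 1) := by
  have hd0 : 0 < d := by omega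
  have hls : LRAux.lset n = ↑(LRAux.F0 ∪ LRAux.F1 n) :=
    Set.Subset.antisymm (LRAux.lset_subset hd0 hpos) (LRAux.F_subset_lset hpos)
  rw [hls, Set.ncard_coe_finset, Finset.card_union_of_disjoint (LRAux.disj_F0_F1 hpos),
    LRAux.card_F0, LRAux.card_F1 hpos]
  rfl

end LRAux

/-- A point of `ℝ^d` all of whose coordinates are integers. -/
def IsLatticePoint {d : ℕ} (x : Fin d → ℝ) : Prop := ∀ i, ∃ z : ℤ, x i = (z : ℝ)

theorem num_lattice_points_lonely_runner_zonotope
    {d : ℕ} (hd : 2 ≤ d) (n : Fin d → ℤ) (hpos : ∀ i, 0 < n i)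
    (hdist : Function.Injective n) (hgcd : Finset.univ.gcd n = 1)
    (Z : Set (Fin d → ℝ))
    (hZ : Z = (∑ j : Fin d, segment ℝ (0 : Fin d → ℝ) (Pi.single j 1)) +
      segment ℝ (0 : Fin d → ℝ) (fun i => (n i : ℝ))) :
    {x | x ∈ Z ∧ IsLatticePoint x}.ncard =
      2 ^ d + ∑ ℓ ∈ Finset.univ.biUnion (fun j : Fin d => (n j).toNat.divisors),
        ℓ.totient * (2 ^ (Finset.univ.filter fun j : Fin d => (ℓ : ℤ) ∣ n j).card - 1) := by
  subst hZ
  have hset : {x : Fin d → ℝ | x ∈ ((∑ j : Fin d, segment ℝ (0 : Fin d → ℝ) (Pi.single j 1)) +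
        segment ℝ (0 : Fin d → ℝ) (fun i => (n i : ℝ))) ∧ IsLatticePoint x} =
      (fun z : Fin d → ℤ => fun i => ((z i : ℝ))) '' LRAux.lset n := by
    ext x
    simp only [Set.mem_setOf_eq, Set.mem_image]
    constructor
    · rintro ⟨hxZ, hlat⟩
      choose zz hzz using hlat
      obtain ⟨t, s, ht, hs, hx⟩ := (LRAux.mem_Z_iff (n := n) x).1 hxZ
      obtain ⟨hs0, hs1⟩ := Set.mem_Icc.1 hs
      refine ⟨zz, ⟨s, hs0, hs1, fun i => ?_⟩, funext fun i => (hzz i).symm⟩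
      have hxi : (zz i : ℝ) = t i + s * n i := (hzz i).symm.trans (hx i)
      obtain ⟨ht0, ht1⟩ := Set.mem_Icc.1 (ht i)
      exact ⟨by linarith, by linarith⟩
    · rintro ⟨z, ⟨s, hs0, hs1, hb⟩, rfl⟩
      refine ⟨?_, fun i => ⟨z i, rfl⟩⟩
      apply (LRAux.mem_Z_iff (n := n) _).2
      refine ⟨fun i => (z i : ℝ) - s * n i, s,
        fun i => Set.mem_Icc.2 ⟨by show (0:ℝ) ≤ (z i : ℝ) - s * n i; linarith [(hb i).1],
          by show (z i : ℝ) - s * n i ≤ 1; linarith [(hb i).2]⟩,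
        Set.mem_Icc.2 ⟨hs0, hs1⟩, fun i => by ring⟩
  rw [hset, Set.ncard_image_of_injective _ ?inj]
  case inj =>
    intro a b h
    funext i
    have h2 : ((a i : ℤ) : ℝ) = ((b i : ℤ) : ℝ) := by simpa using congrFun h i
    exact_mod_cast h2
  exact LRAux.main_card hd n hpos
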